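/- If φ : (G,P) → (G',P') is an essentially surjective fibration of networks (in particular, if φ is surjective on vertices), then the pullback map φ* : V(G',P') → V(G,P) between spaces of groupoid-invariant virtual vector fields is a linear isomorphism. -/

import Mathlib

open Manifold

structure DGraph where
  V : Type
  E : Type
  src : E → V
  tgt : E → V

/-- A map of directed multigraphs: functions on edges and vertices commuting with
source and target. -/
structure GraphMap (G G' : DGraph) where
  vmap : G.V → G'.V
  emap : G.E → G'.E
  src_eq : ∀ e, G'.src (emap e) = vmap (G.src e)
  tgt_eq : ∀ e, G'.tgt (emap e) = vmap (G.tgt e)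

/-- `φ` is a graph fibration if for every vertex `a` of `G` and every edge `e'` of `G'`
with target `φ(a)`, there is a unique edge `e` of `G` with target `a` and `φ(e) = e'`. -/
def GraphMap.IsFibration {G G' : DGraph} (φ : GraphMap G G') : Prop :=
  ∀ (a : G.V) (e' : G'.E), G'.tgt e' = φ.vmap a →
    ∃! e : G.E, G.tgt e = a ∧ φ.emap e = e'

/-- The set of edges of `G` with target `a`. -/
abbrev inEdges (G : DGraph) (a : G.V) : Type := {e : G.E // G.tgt e = a}

/-- The input tree `I(a)` of a vertex `a`: its vertices are `{a} ⊔ t⁻¹(a)` (the root `a`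
is encoded as `none`, the leaf `γ ∈ t⁻¹(a)` as `some γ`), its edges are the pairs `(a, γ)`
for `γ ∈ t⁻¹(a)`, with source `γ` and target the root `a`. -/
def inputTree (G : DGraph) (a : G.V) : DGraph where
  V := Option (inEdges G a)
  E := inEdges G a
  src := fun γ => some γ
  tgt := fun _ => none

/-- An isomorphism of graphs is a graph map bijective on vertices and on edges. -/
def GraphMap.IsIso {G G' : DGraph} (φ : GraphMap G G') : Prop :=
  Function.Bijective φ.vmap ∧ Function.Bijective φ.emap


/-- An isomorphism of input networks `(I(a), P ∘ ξ_a) → (I(a'), P' ∘ ξ_{a'})`.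
Since any isomorphism of height-1 trees sends root to root and is determined by its
action on the leaves (equivalently, on the edges), it is given by a bijection `e` of the
sets of incoming edges; the network (phase-preserving) condition says that the root
phases agree (`hr`) and the phases of corresponding leaves agree (`hl`). -/
structure InputIso {ι : Type} (G : DGraph) (P : G.V → ι) (G' : DGraph) (P' : G'.V → ι)
    (a : G.V) (a' : G'.V) where
  e : inEdges G a ≃ inEdges G' a'
  hr : P' a' = P a
  hl : ∀ γ : inEdges G a, P' (G'.src ((e γ) : inEdges G' a').1) = P (G.src γ.1)

/-- The identity isomorphism of an input network. -/
def InputIso.refl {ι : Type} (G : DGraph) (P : G.V → ι) (a : G.V) :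
    InputIso G P G P a a :=
  ⟨Equiv.refl _, rfl, fun _ => rfl⟩

/-- Composition of isomorphisms of input networks. -/
def InputIso.comp {ι : Type} {G : DGraph} {P : G.V → ι} {G' : DGraph} {P' : G'.V → ι}
    {G'' : DGraph} {P'' : G''.V → ι} {a : G.V} {a' : G'.V} {a'' : G''.V}
    (σ : InputIso G P G' P' a a') (σ' : InputIso G' P' G'' P'' a' a'') :
    InputIso G P G'' P'' a a'' :=
  ⟨σ.e.trans σ'.e, σ'.hr.trans σ.hr, fun γ => (σ'.hl (σ.e γ)).trans (σ.hl γ)⟩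

/-- The inverse of an isomorphism of input networks. -/
def InputIso.inv {ι : Type} {G : DGraph} {P : G.V → ι} {G' : DGraph} {P' : G'.V → ι}
    {a : G.V} {a' : G'.V} (σ : InputIso G P G' P' a a') : InputIso G' P' G P a' a :=
  ⟨σ.e.symm, σ.hr.symm, fun γ' => by
    have h := σ.hl (σ.e.symm γ')
    rw [Equiv.apply_symm_apply] at h
    exact h.symm⟩

variable {ι : Type} {EE : ι → Type} [∀ i, NormedAddCommGroup (EE i)]
  [∀ i, NormedSpace ℝ (EE i)] {HH : ι → Type} [∀ i, TopologicalSpace (HH i)]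
  (II : ∀ i, ModelWithCorners ℝ (EE i) (HH i))
  (MM : ι → Type) [∀ i, TopologicalSpace (MM i)] [∀ i, ChartedSpace (HH i) (MM i)]
  [∀ i, IsManifold (II i) (⊤ : ℕ∞) (MM i)]

/-- The total phase space `P I(a) = P(a) × ⊓_{γ ∈ t⁻¹(a)} P(s(γ))` of the input network
of the vertex `a` of the network `(G, P)` (phase spaces drawn from the family of
manifolds `MM` via the index function `P : G.V → ι`). -/
abbrev PIn (G : DGraph) (P : G.V → ι) (a : G.V) : Type :=
  MM (P a) × ((γ : inEdges G a) → MM (P (G.src γ.1)))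

/-- The underlying (not necessarily smooth) sections of the control space
`Ctrl(P I(a) → P a)`: maps `F` from `P I(a)` to the tangent bundle of `P a = P(a)` with
`F q ∈ T_{p(q)} P(a)`, where `p : P I(a) → P(a)` is the projection onto the root factor. -/
abbrev Raw (G : DGraph) (P : G.V → ι) (a : G.V) : Type :=
  (q : PIn MM G P a) → TangentSpace (II (P a)) q.1

/-- The model with corners for the manifold `P I(a)`. -/
noncomputable def PInModel (G : DGraph) [Fintype G.E] [DecidableEq G.V]
    (P : G.V → ι) (a : G.V) :
    ModelWithCorners ℝ (EE (P a) × ((γ : inEdges G a) → EE (P (G.src γ.1))))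
      (ModelProd (HH (P a)) (ModelPi fun γ : inEdges G a => HH (P (G.src γ.1)))) :=
  (II (P a)).prod (ModelWithCorners.pi fun γ : inEdges G a => II (P (G.src γ.1)))

/-- Smoothness of an element of `Ctrl(P I(a) → P a)`, as a map into the tangent bundle.
`Ctrl(P I(a) → P a)` is the vector space of smooth maps `F : P I(a) → T P(a)` with
`F q ∈ T_{p(q)} P(a)`, i.e. the subspace of smooth elements of `Raw`. -/
def IsSmoothCtrl (G : DGraph) [Fintype G.E] [DecidableEq G.V] (P : G.V → ι) (a : G.V)
    (F : Raw II MM G P a) : Prop :=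
  ContMDiff (PInModel II G P a) (II (P a)).tangent (⊤ : ℕ∞)
    (fun q => Bundle.TotalSpace.mk q.1 (F q) :
      PIn MM G P a → TangentBundle (II (P a)) (MM (P a)))

/-- The map `P φ : P I(a') → P I(a)` of total phase spaces of input networks induced
(contravariantly) by an isomorphism `φ` of input networks. -/
def phaseIn {G : DGraph} {P : G.V → ι} {G' : DGraph} {P' : G'.V → ι} {a : G.V}
    {a' : G'.V} (σ : InputIso G P G' P' a a') : PIn MM G' P' a' → PIn MM G P a :=
  fun q => (cast (congrArg MM σ.hr) q.1,
    fun γ => cast (congrArg MM (σ.hl γ)) (q.2 (σ.e γ)))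

/-- Transport of tangent vectors along an equality of phase space indices; this is the
differential of the induced diffeomorphism of phase spaces (a `cast`). -/
def tcast {i j : ι} (h : i = j) {x : MM i} {y : MM j} (v : TangentSpace (II i) x) :
    TangentSpace (II j) y :=
  cast (congrArg EE h) v

/-- The map `Ctrl(φ) : Ctrl(P I(a) → P a) → Ctrl(P I(a') → P a')`,
`Ctrl(φ)(F) = D(P(φ|ₐ))⁻¹ ∘ F ∘ P φ`, induced by an isomorphism `φ` of input networks:
here `P(φ|ₐ) : P(a') → P(a)` is the diffeomorphism (a `cast`) induced by the restriction
of `φ` to the root, and its differential is `tcast`. -/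
def ctrlMap {G : DGraph} {P : G.V → ι} {G' : DGraph} {P' : G'.V → ι} {a : G.V}
    {a' : G'.V} (σ : InputIso G P G' P' a a') :
    Raw II MM G P a → Raw II MM G' P' a' :=
  fun F q' => tcast II MM σ.hr.symm (F (phaseIn MM σ q'))

/-- A virtual vector field on the network `(G, P)`, i.e. a section of the control bundle,
is smooth if each of its components is a smooth control system. -/
def IsSmoothSec (G : DGraph) [Fintype G.E] [DecidableEq G.V] (P : G.V → ι)
    (w : ∀ a, Raw II MM G P a) : Prop :=
  ∀ a, IsSmoothCtrl II MM G P a (w a)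

/-- A virtual vector field `w` on `(G, P)` is invariant under the symmetry groupoid if
`Ctrl(σ) (w a) = w b` for every isomorphism `σ : (I(a), P∘ξ_a) → (I(b), P∘ξ_b)` of input
networks.  Together with smoothness this cuts out `V(G,P) ⊆ S(G,P)`. -/
def IsInvariantSec (G : DGraph) (P : G.V → ι) (w : ∀ a, Raw II MM G P a) : Prop :=
  ∀ (a b : G.V) (σ : InputIso G P G P a b), ctrlMap II MM σ (w a) = w b

/-- The isomorphism of input networks `φ_a : (I(a), P∘ξ_a) → (I(φ(a)), P'∘ξ_{φ(a)})`
induced by a fibration of networks `φ : (G,P) → (G',P')`. -/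
noncomputable def fibIso {G G' : DGraph} (φ : GraphMap G G') (hφ : φ.IsFibration)
    {P : G.V → ι} {P' : G'.V → ι} (h : ∀ a, P' (φ.vmap a) = P a) (a : G.V) :
    InputIso G P G' P' a (φ.vmap a) where
  e :=
    { toFun := fun γ => ⟨φ.emap γ.1, by rw [φ.tgt_eq, γ.2]⟩
      invFun := fun γ' => ⟨Exists.choose (hφ a γ'.1 γ'.2),
        (Exists.choose_spec (hφ a γ'.1 γ'.2)).1.1⟩
      left_inv := fun γ => Subtype.ext
        (((Exists.choose_spec (hφ a (φ.emap γ.1) (by rw [φ.tgt_eq, γ.2]))).2 γ.1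
          ⟨γ.2, rfl⟩).symm)
      right_inv := fun γ' => Subtype.ext
        (Exists.choose_spec (hφ a γ'.1 γ'.2)).1.2 }
  hr := h a
  hl := fun γ => by
    show P' (G'.src (φ.emap γ.1)) = P (G.src γ.1)
    rw [φ.src_eq]; exact h _

/-- The pullback map `φ* : S(G',P') → S(G,P)` of virtual vector fields along a fibration
of networks `φ`, defined by `(φ* w')_a = Ctrl(φ_a)⁻¹ (w'_{φ(a)})`. -/
noncomputable def pullbackVF {G G' : DGraph} (φ : GraphMap G G') (hφ : φ.IsFibration)
    {P : G.V → ι} {P' : G'.V → ι} (h : ∀ a, P' (φ.vmap a) = P a)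
    (w' : ∀ a', Raw II MM G' P' a') : ∀ a, Raw II MM G P a :=
  fun a => ctrlMap II MM (fibIso φ hφ h a).inv (w' (φ.vmap a))
set_option linter.unusedSectionVars false

/-! ### Auxiliary lemmas -/

section Aux

lemma tcast_tcast {i j k : ι} (h1 : i = j) (h2 : j = k) (h3 : i = k)
    {x : MM i} {y : MM j} {z : MM k} (v : TangentSpace (II i) x) :
    tcast II MM h2 (tcast II MM h1 v (y := y)) = (tcast II MM h3 v : TangentSpace (II k) z) := by
  subst h1; subst h2; rfl

lemma tcast_add {i j : ι} (h : i = j) {x : MM i} {y : MM j}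
    (v w : TangentSpace (II i) x) :
    (tcast II MM h (v + w) : TangentSpace (II j) y) = tcast II MM h v + tcast II MM h w := by
  subst h; rfl

lemma tcast_smul {i j : ι} (h : i = j) {x : MM i} {y : MM j} (c : ℝ)
    (v : TangentSpace (II i) x) :
    (tcast II MM h (c • v) : TangentSpace (II j) y) = c • tcast II MM h v := by
  subst h; rfl

lemma ctrlMap_congr {G : DGraph} {P : G.V → ι} {G' : DGraph} {P' : G'.V → ι}
    {a : G.V} {a' : G'.V} {σ₁ σ₂ : InputIso G P G' P' a a'} (he : σ₁.e = σ₂.e) :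
    ctrlMap II MM σ₁ = ctrlMap II MM σ₂ := by
  cases σ₁; cases σ₂; cases he; rfl

lemma phaseIn_comp {G : DGraph} {P : G.V → ι} {G' : DGraph} {P' : G'.V → ι}
    {G'' : DGraph} {P'' : G''.V → ι} {a : G.V} {a' : G'.V} {a'' : G''.V}
    (σ : InputIso G P G' P' a a') (σ' : InputIso G' P' G'' P'' a' a'')
    (q : PIn MM G'' P'' a'') :
    phaseIn MM σ (phaseIn MM σ' q) = phaseIn MM (σ.comp σ') q := by
  refine Prod.ext ?_ (funext fun γ => ?_)
  · exact cast_cast _ _ _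
  · exact cast_cast _ _ _

lemma ctrlMap_comp {G : DGraph} {P : G.V → ι} {G' : DGraph} {P' : G'.V → ι}
    {G'' : DGraph} {P'' : G''.V → ι} {a : G.V} {a' : G'.V} {a'' : G''.V}
    (σ : InputIso G P G' P' a a') (σ' : InputIso G' P' G'' P'' a' a'')
    (F : Raw II MM G P a) :
    ctrlMap II MM σ' (ctrlMap II MM σ F) = ctrlMap II MM (σ.comp σ') F := by
  funext q
  show tcast II MM σ'.hr.symm (tcast II MM σ.hr.symm (F (phaseIn MM σ (phaseIn MM σ' q))))
    = tcast II MM (σ.comp σ').hr.symm (F (phaseIn MM (σ.comp σ') q))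
  rw [phaseIn_comp]
  exact tcast_tcast II MM _ _ _ _

lemma ctrlMap_refl {G : DGraph} {P : G.V → ι} {a : G.V} (F : Raw II MM G P a) :
    ctrlMap II MM (InputIso.refl G P a) F = F := rfl

lemma ctrlMap_inv_ctrlMap {G : DGraph} {P : G.V → ι} {G' : DGraph} {P' : G'.V → ι}
    {a : G.V} {a' : G'.V} (σ : InputIso G P G' P' a a') (F : Raw II MM G P a) :
    ctrlMap II MM σ.inv (ctrlMap II MM σ F) = F := by
  rw [ctrlMap_comp]
  have he : (σ.comp σ.inv).e = (InputIso.refl G P a).e := by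
    simp [InputIso.comp, InputIso.inv, InputIso.refl]
  rw [ctrlMap_congr II MM he, ctrlMap_refl]

lemma ctrlMap_ctrlMap_inv {G : DGraph} {P : G.V → ι} {G' : DGraph} {P' : G'.V → ι}
    {a : G.V} {a' : G'.V} (σ : InputIso G P G' P' a a') (F : Raw II MM G' P' a') :
    ctrlMap II MM σ (ctrlMap II MM σ.inv F) = F := by
  rw [ctrlMap_comp]
  have he : (σ.inv.comp σ).e = (InputIso.refl G' P' a').e := by
    simp [InputIso.comp, InputIso.inv, InputIso.refl]
  rw [ctrlMap_congr II MM he, ctrlMap_refl]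

lemma ctrlMap_add {G : DGraph} {P : G.V → ι} {G' : DGraph} {P' : G'.V → ι}
    {a : G.V} {a' : G'.V} (σ : InputIso G P G' P' a a') (F F' : Raw II MM G P a) :
    ctrlMap II MM σ (F + F') = ctrlMap II MM σ F + ctrlMap II MM σ F' := by
  funext q
  exact tcast_add II MM _ _ _

lemma ctrlMap_smul {G : DGraph} {P : G.V → ι} {G' : DGraph} {P' : G'.V → ι}
    {a : G.V} {a' : G'.V} (σ : InputIso G P G' P' a a') (c : ℝ) (F : Raw II MM G P a) :
    ctrlMap II MM σ (c • F) = c • ctrlMap II MM σ F := by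
  funext q
  exact tcast_smul II MM _ _ _

/-! ### Smoothness of pi-manifold reindexing and of `ctrlMap` -/

lemma pi_extChartAt_symm_apply {κ : Type} [Fintype κ] (g : κ → ι)
    (x : ∀ γ, MM (g γ)) (p : ∀ γ, EE (g γ)) (γ : κ) :
    (extChartAt (ModelWithCorners.pi fun γ => II (g γ)) x).symm p γ
      = (extChartAt (II (g γ)) (x γ)).symm (p γ) := rfl

lemma mem_pi_extChartAt_source {κ : Type} [Fintype κ] (g : κ → ι)
    (y : ∀ γ, MM (g γ)) (q : ∀ γ, MM (g γ))
    (hq : q ∈ (extChartAt (ModelWithCorners.pi fun γ => II (g γ)) y).source) (γ : κ) :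
    q γ ∈ (extChartAt (II (g γ)) (y γ)).source := by
  rw [extChartAt_source] at hq ⊢
  exact hq γ (Set.mem_univ γ)

lemma mem_pi_extChartAt_target {κ : Type} [Fintype κ] (g : κ → ι)
    (x : ∀ γ, MM (g γ)) (p : ∀ γ, EE (g γ))
    (hp : p ∈ (extChartAt (ModelWithCorners.pi fun γ => II (g γ)) x).target) (γ : κ) :
    p γ ∈ (extChartAt (II (g γ)) (x γ)).target := by
  rw [extChartAt_target] at hp ⊢
  obtain ⟨hp1, hp2⟩ := hp
  refine ⟨hp1 γ (Set.mem_univ γ), ?_⟩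
  have hr : Set.range (ModelWithCorners.pi fun γ => II (g γ))
      = Set.pi Set.univ fun γ => Set.range (II (g γ)) :=
    Set.range_piMap fun γ => ⇑(II (g γ))
  rw [hr] at hp2
  exact hp2 γ (Set.mem_univ γ)

instance piSmoothManifold {κ : Type} [Fintype κ] (g : κ → ι) :
    IsManifold (ModelWithCorners.pi fun γ => II (g γ)) (⊤ : ℕ∞) (∀ γ, MM (g γ)) := by
  apply isManifold_of_contDiffOn
  rintro e e' ⟨c, hc, rfl⟩ ⟨c', hc', rfl⟩
  rw [contDiffOn_pi]
  intro γ
  have h1 : (c γ).symm ≫ₕ (c' γ) ∈ contDiffGroupoid (⊤ : ℕ∞) (II (g γ)) :=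
    StructureGroupoid.compatible _ (hc γ trivial) (hc' γ trivial)
  have h2 : ContDiffOn ℝ (⊤ : ℕ∞) ((II (g γ)) ∘ ((c γ).symm ≫ₕ (c' γ)) ∘ (II (g γ)).symm)
      ((II (g γ)).symm ⁻¹' ((c γ).symm ≫ₕ (c' γ)).source ∩ Set.range (II (g γ))) :=
    (mem_groupoid_of_pregroupoid.mp h1).1
  have heval : ContDiff ℝ (⊤ : ℕ∞) (fun p : ∀ δ, EE (g δ) => p γ) :=
    (ContinuousLinearMap.proj (R := ℝ) (φ := fun δ => EE (g δ)) γ).contDiff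
  refine (h2.comp heval.contDiffOn ?_)
  rintro p ⟨hp1, hp2⟩
  obtain ⟨ha, hb⟩ := hp1
  refine ⟨⟨ha γ trivial, hb γ trivial⟩, ?_⟩
  have hr : Set.range (ModelWithCorners.pi fun δ => II (g δ))
      = Set.pi Set.univ fun δ => Set.range (II (g δ)) :=
    Set.range_piMap fun δ => ⇑(II (g δ))
  rw [hr] at hp2
  exact hp2 γ trivial

lemma contMDiff_pi_reindex {κ κ' : Type} [Fintype κ] [Fintype κ'] (g : κ' → ι) (e : κ ≃ κ') :
    ContMDiff (ModelWithCorners.pi fun γ' => II (g γ'))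
      (ModelWithCorners.pi fun γ => II (g (e γ))) (⊤ : ℕ∞)
      (fun (q : ∀ γ', MM (g γ')) γ => q (e γ)) := by
  rw [contMDiff_iff]
  refine ⟨continuous_pi fun γ => continuous_apply (e γ), fun x y => ?_⟩
  rw [contDiffOn_pi]
  intro γ
  have hcd := contDiffOn_ext_coord_change (I := II (g (e γ))) (n := ((⊤ : ℕ∞) : WithTop ℕ∞)) (y γ) (x (e γ))
  have heval : ContDiff ℝ ((⊤ : ℕ∞) : WithTop ℕ∞) (fun p : ∀ γ', EE (g γ') => p (e γ)) :=
    (ContinuousLinearMap.proj (R := ℝ) (φ := fun γ' => EE (g γ')) (e γ)).contDiff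
  show ContDiffOn ℝ ((⊤ : ℕ∞) : WithTop ℕ∞)
    ((↑(extChartAt (II (g (e γ))) (y γ)) ∘ ↑(extChartAt (II (g (e γ))) (x (e γ))).symm)
      ∘ (fun p : ∀ γ', EE (g γ') => p (e γ))) _
  refine ContDiffOn.comp hcd heval.contDiffOn ?_
  intro p hp
  obtain ⟨hp1, hp2⟩ := hp
  have hA : p (e γ) ∈ (extChartAt (II (g (e γ))) (x (e γ))).target :=
    mem_pi_extChartAt_target II MM _ x p hp1 (e γ)
  have hB := mem_pi_extChartAt_source II MM (fun γ => g (e γ)) y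
    (fun γ => (extChartAt (ModelWithCorners.pi fun γ' => II (g γ')) x).symm p (e γ)) hp2 γ
  exact Set.mem_inter hA hB

lemma ctrlMap_smooth_aux {κ κ' : Type} [Fintype κ] [Fintype κ'] (e : κ ≃ κ')
    {i i' : ι} (hi : i' = i) {f : κ → ι} {f' : κ' → ι} (hf : ∀ γ, f' (e γ) = f γ)
    (F : (q : MM i × ((γ : κ) → MM (f γ))) → TangentSpace (II i) q.1)
    (hF : ContMDiff ((II i).prod (ModelWithCorners.pi fun γ => II (f γ)))
      (II i).tangent (⊤ : ℕ∞)
      (fun q => Bundle.TotalSpace.mk q.1 (F q) :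
        MM i × ((γ : κ) → MM (f γ)) → TangentBundle (II i) (MM i))) :
    ContMDiff ((II i').prod (ModelWithCorners.pi fun γ' => II (f' γ')))
      (II i').tangent (⊤ : ℕ∞)
      (fun q' : MM i' × ((γ' : κ') → MM (f' γ')) =>
        Bundle.TotalSpace.mk q'.1
          (tcast II MM hi.symm (F (cast (congrArg MM hi) q'.1,
            fun γ => cast (congrArg MM (hf γ)) (q'.2 (e γ))))) :
        MM i' × ((γ' : κ') → MM (f' γ')) → TangentBundle (II i') (MM i')) := by
  subst hi
  have hf2 : f = fun γ => f' (e γ) := funext fun γ => (hf γ).symm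
  subst hf2
  exact hF.comp (ContMDiff.prodMk contMDiff_fst
    ((contMDiff_pi_reindex II MM f' e).comp contMDiff_snd))

lemma ctrlMap_smooth {G G' : DGraph} [Fintype G.E] [DecidableEq G.V]
    [Fintype G'.E] [DecidableEq G'.V] {P : G.V → ι} {P' : G'.V → ι}
    {a : G.V} {a' : G'.V} (σ : InputIso G P G' P' a a') {F : Raw II MM G P a}
    (hF : IsSmoothCtrl II MM G P a F) :
    IsSmoothCtrl II MM G' P' a' (ctrlMap II MM σ F) :=
  ctrlMap_smooth_aux II MM σ.e σ.hr σ.hl F hF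

end Aux

/-- **Essentially surjective fibrations induce isomorphisms on invariant virtual vector
fields.** If `φ : (G,P) → (G',P')` is an essentially surjective fibration of networks
(in particular, if `φ` is surjective on vertices), then the pullback
`φ* : V(G',P') → V(G,P)` is a linear isomorphism: it is linear, maps `V(G',P')` into
`V(G,P)`, and every element of `V(G,P)` is the pullback of a unique element of
`V(G',P')`. -/
theorem pullback_iso_of_essentially_surjective
    {G G' : DGraph} [Fintype G.E] [DecidableEq G.V] [Fintype G'.E] [DecidableEq G'.V]
    (φ : GraphMap G G') (hφ : φ.IsFibration)
    {P : G.V → ι} {P' : G'.V → ι} (h : ∀ a, P' (φ.vmap a) = P a)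
    (hess : ∀ a' : G'.V, ∃ a : G.V, Nonempty (InputIso G' P' G' P' a' (φ.vmap a))) :
    (∀ w₁ w₂ : ∀ a', Raw II MM G' P' a',
      pullbackVF II MM φ hφ h (w₁ + w₂) =
        pullbackVF II MM φ hφ h w₁ + pullbackVF II MM φ hφ h w₂) ∧
    (∀ (c : ℝ) (w' : ∀ a', Raw II MM G' P' a'),
      pullbackVF II MM φ hφ h (c • w') = c • pullbackVF II MM φ hφ h w') ∧
    (∀ w' : ∀ a', Raw II MM G' P' a',
      IsSmoothSec II MM G' P' w' → IsInvariantSec II MM G' P' w' →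
        IsSmoothSec II MM G P (pullbackVF II MM φ hφ h w') ∧
          IsInvariantSec II MM G P (pullbackVF II MM φ hφ h w')) ∧
    (∀ w : ∀ a, Raw II MM G P a,
      IsSmoothSec II MM G P w → IsInvariantSec II MM G P w →
        ∃! w' : {w' : ∀ a', Raw II MM G' P' a' //
            IsSmoothSec II MM G' P' w' ∧ IsInvariantSec II MM G' P' w'},
          pullbackVF II MM φ hφ h w'.1 = w) := by
  refine ⟨?_, ?_, ?_, ?_⟩
  · intro w₁ w₂
    funext a
    exact ctrlMap_add II MM _ (w₁ (φ.vmap a)) (w₂ (φ.vmap a))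
  · intro c w'
    funext a
    exact ctrlMap_smul II MM _ c (w' (φ.vmap a))
  · intro w' hs hinv
    refine ⟨fun a => ctrlMap_smooth II MM _ (hs (φ.vmap a)), ?_⟩
    intro a b σ
    calc ctrlMap II MM σ (pullbackVF II MM φ hφ h w' a)
        = ctrlMap II MM ((fibIso φ hφ h a).inv.comp σ) (w' (φ.vmap a)) :=
          ctrlMap_comp II MM _ _ _
      _ = ctrlMap II MM ((((fibIso φ hφ h a).inv.comp σ).comp (fibIso φ hφ h b)).comp
            (fibIso φ hφ h b).inv) (w' (φ.vmap a)) := by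
          refine congrFun (ctrlMap_congr II MM ?_) _
          simp [InputIso.comp, InputIso.inv, Equiv.trans_assoc]
      _ = ctrlMap II MM (fibIso φ hφ h b).inv
            (ctrlMap II MM (((fibIso φ hφ h a).inv.comp σ).comp (fibIso φ hφ h b))
              (w' (φ.vmap a))) := (ctrlMap_comp II MM _ _ _).symm
      _ = pullbackVF II MM φ hφ h w' b := by
          rw [hinv (φ.vmap a) (φ.vmap b) _]; rfl
  · intro w hs hinv
    classical
    let a0 : G'.V → G.V := fun a' => (hess a').choose
    let τ : ∀ a', InputIso G' P' G' P' a' (φ.vmap (a0 a')) :=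
      fun a' => (hess a').choose_spec.some
    let σ : ∀ a', InputIso G P G' P' (a0 a') a' :=
      fun a' => (fibIso φ hφ h (a0 a')).comp (τ a').inv
    let w' : ∀ a', Raw II MM G' P' a' := fun a' => ctrlMap II MM (σ a') (w (a0 a'))
    have hsm : IsSmoothSec II MM G' P' w' :=
      fun a' => ctrlMap_smooth II MM _ (hs (a0 a'))
    have hin : IsInvariantSec II MM G' P' w' := by
      intro a' b' ρ
      calc ctrlMap II MM ρ (w' a')
          = ctrlMap II MM ((σ a').comp ρ) (w (a0 a')) := ctrlMap_comp II MM _ _ _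
        _ = ctrlMap II MM (((((σ a').comp ρ).comp (σ b').inv)).comp (σ b')) (w (a0 a')) := by
            refine congrFun (ctrlMap_congr II MM ?_) _
            simp [InputIso.comp, InputIso.inv, Equiv.trans_assoc]
        _ = ctrlMap II MM (σ b')
              (ctrlMap II MM (((σ a').comp ρ).comp (σ b').inv) (w (a0 a'))) :=
            (ctrlMap_comp II MM _ _ _).symm
        _ = w' b' := by rw [hinv _ _ _]
    have hpull : pullbackVF II MM φ hφ h w' = w := by
      funext a
      calc pullbackVF II MM φ hφ h w' a
          = ctrlMap II MM ((σ (φ.vmap a)).comp (fibIso φ hφ h a).inv)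
              (w (a0 (φ.vmap a))) := ctrlMap_comp II MM _ _ _
        _ = w a := hinv _ _ _
    refine ⟨⟨w', hsm, hin⟩, hpull, ?_⟩
    rintro ⟨w'', hs'', hin''⟩ hpw
    apply Subtype.ext
    funext a'
    show w'' a' = w' a'
    have h1 : ctrlMap II MM (fibIso φ hφ h (a0 a')).inv (w'' (φ.vmap (a0 a')))
        = w (a0 a') := congrFun hpw (a0 a')
    have h2 : w'' (φ.vmap (a0 a'))
        = ctrlMap II MM (fibIso φ hφ h (a0 a')) (w (a0 a')) := by
      rw [← h1, ctrlMap_ctrlMap_inv]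
    have h3 : ctrlMap II MM (τ a') (w'' a') = w'' (φ.vmap (a0 a')) :=
      hin'' a' (φ.vmap (a0 a')) (τ a')
    calc w'' a'
        = ctrlMap II MM (τ a').inv (ctrlMap II MM (τ a') (w'' a')) :=
          (ctrlMap_inv_ctrlMap II MM _ _).symm
      _ = ctrlMap II MM (τ a').inv
            (ctrlMap II MM (fibIso φ hφ h (a0 a')) (w (a0 a'))) := by rw [h3, h2]
      _ = ctrlMap II MM ((fibIso φ hφ h (a0 a')).comp (τ a').inv) (w (a0 a')) :=
          ctrlMap_comp II MM _ _ _
      _ = w' a' := rfl
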